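/- Let $q \in (0,1)$. The function $z \mapsto \Psi_q''(z)/\Psi_q'(z)$ is strictly increasing on $(0,\infty)$ and converges to $\log q$ as $z \to \infty$. Consequently $\Psi_q''(z)/\Psi_q'(z) < \log q$ for all $z > 0$. -/

import Mathlib

noncomputable def Psi1 (q z : ℝ) : ℝ :=
  (Real.log q) ^ 2 * ∑' n : ℕ, ((n : ℝ) + 1) * q ^ (((n : ℝ) + 1) * z) / (1 - q ^ (n + 1))

noncomputable def Psi2 (q z : ℝ) : ℝ :=
  (Real.log q) ^ 3 * ∑' n : ℕ, ((n : ℝ) + 1) ^ 2 * q ^ (((n : ℝ) + 1) * z) / (1 - q ^ (n + 1))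

noncomputable def myc (q x : ℝ) (k n : ℕ) : ℝ := ((n:ℝ)+1)^k * x^(n+1) / (1 - q^(n+1))
noncomputable def myS (q x : ℝ) (k : ℕ) : ℝ := ∑' n, myc q x k n
noncomputable def myC (q : ℝ) : ℝ := ∑' m : ℕ, ((m:ℝ)+2)^2 * q^m / (1-q)

section
variable {q x y : ℝ}

lemma den_pos (hq0 : 0 < q) (hq1 : q < 1) (n : ℕ) : 0 < 1 - q^(n+1) := by
  have := pow_lt_one₀ hq0.le hq1 (Nat.succ_ne_zero n)
  rw [Nat.succ_eq_add_one] at this; linarith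

lemma den_le (hq0 : 0 < q) (hq1 : q < 1) (n : ℕ) : 1 - q ≤ 1 - q^(n+1) := by
  have : q^(n+1) ≤ q := by
    calc q^(n+1) = q^n * q := pow_succ q n
    _ ≤ 1 * q := by
        apply mul_le_mul_of_nonneg_right _ hq0.le
        exact pow_le_one₀ hq0.le hq1.le
    _ = q := one_mul q
  linarith

lemma myc_nonneg (hq0 : 0 < q) (hq1 : q < 1) (hx : 0 ≤ x) (k n : ℕ) : 0 ≤ myc q x k n := by
  have := den_pos hq0 hq1 n
  unfold myc; positivity

lemma myc_pos (hq0 : 0 < q) (hq1 : q < 1) (hx : 0 < x) (k n : ℕ) : 0 < myc q x k n := by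
  have := den_pos hq0 hq1 n
  unfold myc; positivity

lemma summable_myc (hq0 : 0 < q) (hq1 : q < 1) (hx0 : 0 ≤ x) (hx1 : x < 1) (k : ℕ) :
    Summable (myc q x k) := by
  have hb : Summable (fun n : ℕ => ((n:ℝ))^k * x^n) :=
    summable_pow_mul_geometric_of_norm_lt_one k (by rwa [Real.norm_eq_abs, abs_of_nonneg hx0])
  have hb2 : Summable (fun n : ℕ => (((n:ℕ)+1:ℕ):ℝ)^k * x^((n:ℕ)+1)) :=
    hb.comp_injective Nat.succ_injective
  have hb3 : Summable (fun n : ℕ => ((((n:ℕ)+1:ℕ)):ℝ)^k * x^((n:ℕ)+1) / (1-q)) :=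
    hb2.div_const _
  apply Summable.of_nonneg_of_le (myc_nonneg hq0 hq1 hx0 k) _ hb3
  intro n
  have hd := den_pos hq0 hq1 n
  have hq' := den_le hq0 hq1 n
  unfold myc
  push_cast
  gcongr <;> first | positivity | linarith

lemma myS_pos (hq0 : 0 < q) (hq1 : q < 1) (hx0 : 0 < x) (hx1 : x < 1) (k : ℕ) :
    0 < myS q x k :=
  Summable.tsum_pos (summable_myc hq0 hq1 hx0.le hx1 k) (myc_nonneg hq0 hq1 hx0.le k) 0
    (myc_pos hq0 hq1 hx0 k 0)

lemma core_le (hx : 0 < x) (hxy : x ≤ y) {m n : ℕ} (h : n ≤ m) :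
    x^(m+1)*y^(n+1) ≤ y^(m+1)*x^(n+1) := by
  have hy : 0 < y := lt_of_lt_of_le hx hxy
  have hm : m + 1 = (m - n) + (n+1) := by omega
  have e1 : x^(m+1) = x^(m-n)*x^(n+1) := by rw [hm, pow_add]
  have e2 : y^(m+1) = y^(m-n)*y^(n+1) := by rw [hm, pow_add]
  have h1 : x^(m-n) ≤ y^(m-n) := pow_le_pow_left₀ hx.le hxy _
  rw [e1, e2]
  nlinarith [mul_nonneg (sub_nonneg.2 h1)
    (mul_nonneg (pow_nonneg hx.le (n+1)) (pow_nonneg hy.le (n+1)))]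

lemma core_sign (hx : 0 < x) (hxy : x ≤ y) (m n : ℕ) :
    0 ≤ ((m:ℝ) - n) * (y^(m+1) * x^(n+1) - x^(m+1) * y^(n+1)) := by
  rcases le_total n m with h | h
  · apply mul_nonneg
    · simp [sub_nonneg, Nat.cast_le.2 h]
    · have := core_le hx hxy h
      linarith
  · have ha : ((m:ℝ) - n) ≤ 0 := by simp [sub_nonpos, Nat.cast_le.2 h]
    have hb : (y^(m+1) * x^(n+1) - x^(m+1) * y^(n+1)) ≤ 0 := by
      have := core_le hx hxy h
      linarith
    have := mul_nonneg (neg_nonneg.2 ha) (neg_nonneg.2 hb)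
    rwa [neg_mul_neg] at this

lemma swap_identity (hq0 : 0 < q) (hq1 : q < 1) (m n : ℕ) :
    (myc q y 2 m * myc q x 1 n - myc q x 2 m * myc q y 1 n)
      + (myc q y 2 n * myc q x 1 m - myc q x 2 n * myc q y 1 m)
    = (((m:ℝ)+1)*((n:ℝ)+1) / ((1 - q^(m+1)) * (1 - q^(n+1))))
        * (((m:ℝ) - n) * (y^(m+1) * x^(n+1) - x^(m+1) * y^(n+1))) := by
  have hm := (den_pos hq0 hq1 m).ne'
  have hn := (den_pos hq0 hq1 n).ne'
  unfold myc
  field_simp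
  ring

lemma D_pos (hq0 : 0 < q) (hq1 : q < 1) (hx0 : 0 < x) (hxy : x < y) (hy1 : y < 1) :
    0 < myS q y 2 * myS q x 1 - myS q x 2 * myS q y 1 := by
  have hy0 : 0 < y := hx0.trans hxy
  have hx1 : x < 1 := hxy.trans hy1
  have s2y := summable_myc hq0 hq1 hy0.le hy1 2
  have s1x := summable_myc hq0 hq1 hx0.le hx1 1
  have s2x := summable_myc hq0 hq1 hx0.le hx1 2
  have s1y := summable_myc hq0 hq1 hy0.le hy1 1
  set F : ℕ × ℕ → ℝ := fun p => myc q y 2 p.1 * myc q x 1 p.2 - myc q x 2 p.1 * myc q y 1 p.2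
    with hF
  have sum1 : Summable (fun p : ℕ × ℕ => myc q y 2 p.1 * myc q x 1 p.2) :=
    s2y.mul_of_nonneg s1x (myc_nonneg hq0 hq1 hy0.le 2) (myc_nonneg hq0 hq1 hx0.le 1)
  have sum2 : Summable (fun p : ℕ × ℕ => myc q x 2 p.1 * myc q y 1 p.2) :=
    s2x.mul_of_nonneg s1y (myc_nonneg hq0 hq1 hx0.le 2) (myc_nonneg hq0 hq1 hy0.le 1)
  have sF : Summable F := sum1.sub sum2
  have hD : myS q y 2 * myS q x 1 - myS q x 2 * myS q y 1 = ∑' p, F p := by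
    unfold myS
    rw [Summable.tsum_mul_tsum s2y s1x sum1, Summable.tsum_mul_tsum s2x s1y sum2, ← Summable.tsum_sub sum1 sum2]
  rw [hD]
  have sFs : Summable (F ∘ Prod.swap) := by
    apply ((Equiv.prodComm ℕ ℕ).summable_iff).2 sF
  have hswap : ∑' p, F (Prod.swap p) = ∑' p, F p := (Equiv.prodComm ℕ ℕ).tsum_eq F
  have key : 0 < ∑' p : ℕ × ℕ, (F p + F (Prod.swap p)) := by
    apply Summable.tsum_pos (sF.add sFs)
    · intro p
      obtain ⟨m, n⟩ := p
      have := swap_identity (x := x) (y := y) hq0 hq1 m n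
      simp only [hF, Function.comp_apply, Prod.fst_swap, Prod.snd_swap]
      rw [this]
      apply mul_nonneg
      · have h1 := den_pos hq0 hq1 m
        have h2 := den_pos hq0 hq1 n
        positivity
      · exact core_sign hx0 hxy.le m n
    · show (0:ℝ) < F (1,0) + F (Prod.swap (1,0))
      have := swap_identity (x := x) (y := y) hq0 hq1 1 0
      simp only [hF, Function.comp_apply, Prod.fst_swap, Prod.snd_swap]
      rw [this]
      apply mul_pos
      · have h1 := den_pos hq0 hq1 1
        have h2 := den_pos hq0 hq1 0
        positivity
      · push_cast
        nlinarith [mul_pos (mul_pos hx0 hy0) (sub_pos.2 hxy)]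
  have h2 : ∑' p : ℕ × ℕ, (F p + F (Prod.swap p)) = 2 * ∑' p, F p := by
    have h3 := Summable.tsum_add sF sFs
    simp only [Function.comp_apply] at h3
    rw [h3, hswap]; ring
  rw [h2] at key
  linarith

lemma rpow_term (hq0 : 0 < q) (z : ℝ) (n : ℕ) :
    q ^ (((n : ℝ) + 1) * z) = (q ^ z) ^ (n+1) := by
  rw [mul_comm, Real.rpow_mul hq0.le]
  rw [show ((n:ℝ) + 1) = (((n+1 : ℕ)) : ℝ) by push_cast; ring, Real.rpow_natCast]

lemma psi1_eq (hq0 : 0 < q) (z : ℝ) :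
    Psi1 q z = (Real.log q)^2 * myS q (q^z) 1 := by
  unfold Psi1 myS myc
  congr 1
  apply tsum_congr
  intro n
  rw [rpow_term hq0 z n, pow_one]

lemma psi2_eq (hq0 : 0 < q) (z : ℝ) :
    Psi2 q z = (Real.log q)^3 * myS q (q^z) 2 := by
  unfold Psi2 myS myc
  congr 1
  apply tsum_congr
  intro n
  rw [rpow_term hq0 z n]

lemma ratio_eq (hq0 : 0 < q) (hq1 : q < 1) (z : ℝ) :
    Psi2 q z / Psi1 q z = Real.log q * (myS q (q^z) 2 / myS q (q^z) 1) := by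
  have hL : Real.log q ≠ 0 := (Real.log_neg hq0 hq1).ne
  rw [psi1_eq hq0, psi2_eq hq0]
  rw [show (Real.log q)^3 = (Real.log q)^2 * Real.log q by ring, mul_assoc,
    mul_div_mul_left _ _ (pow_ne_zero 2 hL), mul_div_assoc]

lemma summable_e (hq0 : 0 < q) (hq1 : q < 1) :
    Summable (fun m : ℕ => ((m:ℝ)+2)^2 * q^m / (1-q)) := by
  have h : Summable (fun n : ℕ => ((n:ℝ))^2 * q^n) :=
    summable_pow_mul_geometric_of_norm_lt_one 2
      (by rw [Real.norm_eq_abs, abs_of_pos hq0]; exact hq1)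
  have h2 : Summable (fun m : ℕ => (((m+2 : ℕ)):ℝ)^2 * q^(m+2)) :=
    h.comp_injective (add_left_injective 2)
  have h3 := (h2.mul_left ((q^2)⁻¹)).div_const (1-q)
  apply h3.congr
  intro m
  have hq : q ≠ 0 := hq0.ne'
  congr 1
  push_cast
  rw [pow_add]
  field_simp

lemma myC_nonneg (hq0 : 0 < q) (hq1 : q < 1) : 0 ≤ myC q := by
  unfold myC
  apply tsum_nonneg
  intro m
  have : 0 < 1 - q := by linarith
  positivity

lemma S1_lower (hq0 : 0 < q) (hq1 : q < 1) (hx0 : 0 ≤ x) (hx1 : x < 1) :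
    x/(1-q) ≤ myS q x 1 := by
  have h := Summable.le_tsum (summable_myc hq0 hq1 hx0 hx1 1) 0
    (fun j _ => myc_nonneg hq0 hq1 hx0 1 j)
  simpa [myc, myS] using h

lemma S1_le_S2 (hq0 : 0 < q) (hq1 : q < 1) (hx0 : 0 ≤ x) (hx1 : x < 1) :
    myS q x 1 ≤ myS q x 2 := by
  apply Summable.tsum_le_tsum _ (summable_myc hq0 hq1 hx0 hx1 1) (summable_myc hq0 hq1 hx0 hx1 2)
  intro n
  unfold myc
  have hd := den_pos hq0 hq1 n
  have h : ((n:ℝ)+1)^1 ≤ ((n:ℝ)+1)^2 := by nlinarith [Nat.cast_nonneg (α := ℝ) n]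
  gcongr

lemma diff_bound (hq0 : 0 < q) (hq1 : q < 1) (hx0 : 0 ≤ x) (hxq : x ≤ q) :
    myS q x 2 - myS q x 1 ≤ x^2 * myC q := by
  have hx1 : x < 1 := lt_of_le_of_lt hxq hq1
  have s2 := summable_myc hq0 hq1 hx0 hx1 2
  have s1 := summable_myc hq0 hq1 hx0 hx1 1
  have sd : Summable (fun n => myc q x 2 n - myc q x 1 n) := s2.sub s1
  have hsub : myS q x 2 - myS q x 1 = ∑' n, (myc q x 2 n - myc q x 1 n) :=
    (Summable.tsum_sub s2 s1).symm
  rw [hsub, Summable.tsum_eq_zero_add sd]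
  have h0 : myc q x 2 0 - myc q x 1 0 = 0 := by
    simp [myc]
  rw [h0, zero_add]
  have hC : ∑' m : ℕ, x^2 * (((m:ℝ)+2)^2 * q^m / (1-q)) = x^2 * myC q := by
    rw [tsum_mul_left]; rfl
  rw [← hC]
  apply Summable.tsum_le_tsum _ (sd.comp_injective Nat.succ_injective)
    ((summable_e hq0 hq1).mul_left (x^2))
  intro m
  have hd := den_pos hq0 hq1 (m+1)
  have hq' := den_le hq0 hq1 (m+1)
  have h1q : 0 < 1 - q := by linarith
  have hxm : x^(m+1+1) ≤ x^2 * q^m := by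
    calc x^(m+1+1) = x^2 * x^m := by ring
    _ ≤ x^2 * q^m := by
        apply mul_le_mul_of_nonneg_left (pow_le_pow_left₀ hx0 hxq m) (by positivity)
  calc myc q x 2 (m+1) - myc q x 1 (m+1) ≤ myc q x 2 (m+1) := by
        have := myc_nonneg hq0 hq1 hx0 1 (m+1)
        linarith
    _ = (((m:ℝ)+2))^2 * x^(m+1+1) / (1 - q^(m+1+1)) := by
        unfold myc; push_cast; ring_nf
    _ ≤ (((m:ℝ)+2))^2 * (x^2 * q^m) / (1-q) := by
        gcongr <;> first | positivity | linarith
    _ = x^2 * (((m:ℝ)+2)^2 * q^m / (1-q)) := by ring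

lemma tendsto_ratio (hq0 : 0 < q) (hq1 : q < 1) :
    Filter.Tendsto (fun z => Psi2 q z / Psi1 q z) Filter.atTop (nhds (Real.log q)) := by
  set L := Real.log q with hLdef
  have hL : L < 0 := Real.log_neg hq0 hq1
  set K := myC q * (1-q) with hK
  have hK0 : 0 ≤ K := mul_nonneg (myC_nonneg hq0 hq1) (by linarith)
  have hx := fun z => Real.rpow_pos_of_pos hq0 z
  have hqz : Filter.Tendsto (fun z : ℝ => q ^ z) Filter.atTop (nhds 0) :=
    tendsto_rpow_atTop_of_base_lt_one q (by linarith) hq1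
  have hg : Filter.Tendsto (fun z : ℝ => L * (1 + q^z * K)) Filter.atTop (nhds L) := by
    have : Filter.Tendsto (fun z : ℝ => L * (1 + q^z * K)) Filter.atTop
        (nhds (L * (1 + 0 * K))) :=
      Filter.Tendsto.mul tendsto_const_nhds ((hqz.mul_const K).const_add 1)
    simpa using this
  apply tendsto_of_tendsto_of_tendsto_of_le_of_le' hg
    (tendsto_const_nhds : Filter.Tendsto (fun _ : ℝ => L) Filter.atTop (nhds L))
  · filter_upwards [Filter.eventually_ge_atTop 1] with z hz
    set x := q ^ z with hxdef
    have hx0 : 0 < x := hx z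
    have hxq : x ≤ q := by
      have := Real.rpow_le_rpow_of_exponent_ge hq0 hq1.le hz
      rwa [Real.rpow_one] at this
    have hx1 : x < 1 := lt_of_le_of_lt hxq hq1
    have hS1 := myS_pos hq0 hq1 hx0 hx1 1
    have hS2 := myS_pos hq0 hq1 hx0 hx1 2
    have hrle : myS q x 2 / myS q x 1 ≤ 1 + x * K := by
      have hdb := diff_bound hq0 hq1 hx0.le hxq
      have hlow := S1_lower hq0 hq1 hx0.le hx1
      have hlow0 : 0 < x / (1-q) := by
        have : 0 < 1 - q := by linarith
        positivity
      have h1 : (myS q x 2 - myS q x 1) / myS q x 1 ≤ (x^2 * myC q) / (x / (1-q)) := by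
        apply div_le_div₀ (mul_nonneg (by positivity) (myC_nonneg hq0 hq1)) hdb hlow0 hlow
      have h2 : (x^2 * myC q) / (x / (1-q)) = x * K := by
        rw [hK]
        field_simp
      have h3 : myS q x 2 / myS q x 1 = 1 + (myS q x 2 - myS q x 1) / myS q x 1 := by
        field_simp
        ring
      rw [h3]
      rw [h2] at h1
      linarith
    rw [ratio_eq hq0 hq1 z, ← hxdef, ← hLdef]
    nlinarith [hrle, hL]
  · filter_upwards [Filter.eventually_ge_atTop 1] with z hz
    set x := q ^ z with hxdef
    have hx0 : 0 < x := hx z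
    have hxq : x ≤ q := by
      have := Real.rpow_le_rpow_of_exponent_ge hq0 hq1.le hz
      rwa [Real.rpow_one] at this
    have hx1 : x < 1 := lt_of_le_of_lt hxq hq1
    have hS1 := myS_pos hq0 hq1 hx0 hx1 1
    have hr1 : 1 ≤ myS q x 2 / myS q x 1 :=
      (one_le_div hS1).2 (S1_le_S2 hq0 hq1 hx0.le hx1)
    rw [ratio_eq hq0 hq1 z, ← hxdef, ← hLdef]
    nlinarith [hr1, hL]

lemma mono_ratio (hq0 : 0 < q) (hq1 : q < 1) :
    StrictMonoOn (fun z => Psi2 q z / Psi1 q z) (Set.Ioi (0 : ℝ)) := by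
  intro z1 hz1 z2 hz2 h12
  simp only [Set.mem_Ioi] at hz1 hz2
  set x := q ^ z2 with hxdef
  set y := q ^ z1 with hydef
  have hx0 : 0 < x := Real.rpow_pos_of_pos hq0 z2
  have hxy : x < y := Real.rpow_lt_rpow_of_exponent_gt hq0 hq1 h12
  have hy1 : y < 1 := Real.rpow_lt_one hq0.le hq1 hz1
  have hx1 : x < 1 := hxy.trans hy1
  have hy0 : 0 < y := hx0.trans hxy
  have hL : Real.log q < 0 := Real.log_neg hq0 hq1
  have S1x := myS_pos hq0 hq1 hx0 hx1 1
  have S1y := myS_pos hq0 hq1 hy0 hy1 1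
  have hD := D_pos hq0 hq1 hx0 hxy hy1
  have hlt : myS q x 2 / myS q x 1 < myS q y 2 / myS q y 1 := by
    rw [div_lt_div_iff₀ S1x S1y]
    nlinarith [hD]
  simp only
  rw [ratio_eq hq0 hq1 z1, ratio_eq hq0 hq1 z2, ← hxdef, ← hydef]
  exact mul_lt_mul_of_neg_left hlt hL

theorem stmt_12 (q : ℝ) (hq0 : 0 < q) (hq1 : q < 1) :
    StrictMonoOn (fun z => Psi2 q z / Psi1 q z) (Set.Ioi (0 : ℝ)) ∧
    Filter.Tendsto (fun z => Psi2 q z / Psi1 q z) Filter.atTop (nhds (Real.log q)) ∧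
    ∀ z : ℝ, 0 < z → Psi2 q z / Psi1 q z < Real.log q := by
  refine ⟨mono_ratio hq0 hq1, tendsto_ratio hq0 hq1, ?_⟩
  intro z hz
  have h1 : Psi2 q z / Psi1 q z < Psi2 q (z+1) / Psi1 q (z+1) :=
    mono_ratio hq0 hq1 (Set.mem_Ioi.2 hz) (Set.mem_Ioi.2 (by linarith)) (by linarith)
  have h2 : Psi2 q (z+1) / Psi1 q (z+1) ≤ Real.log q := by
    apply ge_of_tendsto (tendsto_ratio hq0 hq1)
    filter_upwards [Filter.eventually_ge_atTop (z+1)] with w hw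
    rcases eq_or_lt_of_le hw with h | h
    · rw [← h]
    · exact le_of_lt ((mono_ratio hq0 hq1) (Set.mem_Ioi.2 (by linarith))
        (Set.mem_Ioi.2 (by linarith)) h)
  linarith

end
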